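/- The two-step iteration P_J * Ṫ of Jech's forcing for adding a Suslin tree followed by forcing with the generic tree has a dense σ-closed subset, namely D = {(p, q̌) : p ∈ P_J, height(p) = α+1, q a node of p of level α}. -/

import Mathlib

/-- The first uncountable ordinal `ω₁`. -/
noncomputable def omega1 : Ordinal := (Cardinal.aleph 1).ord

/-- A node of a tree: a partial function from ordinals to `ℕ`. -/
def JNode : Type 1 := Ordinal → Option ℕ

/-- `f` is a node of height (level) `β`: its domain is exactly `Iio β`. -/
def HasHeight (f : JNode) (β : Ordinal) : Prop := ∀ γ, (f γ).isSome ↔ γ < β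

/-- `g` extends `f` as a partial function. -/
def JExtends (f g : JNode) : Prop := ∀ γ, (f γ).isSome → g γ = f γ

/-- The restriction `f ↾ α` of a node to the levels below `α`. -/
noncomputable def JRestrict (f : JNode) (α : Ordinal) : JNode :=
  fun γ => if γ < α then f γ else none

/-- A condition of Jech's forcing `P_J`: a countable normal tree of countable
successor height. -/
structure IsJCond (p : Set JNode) : Prop where
  countable : p.Countable
  nodes : ∀ f ∈ p, ∃ β < omega1, HasHeight f β
  closedRestrict : ∀ f ∈ p, ∀ α, JRestrict f α ∈ p
  succHeight : ∃ α < omega1,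
    (∀ f ∈ p, ∀ γ, (f γ).isSome → γ ≤ α) ∧ ∃ f ∈ p, HasHeight f (α + 1)
  normal : ∀ f ∈ p, ∀ g ∈ p, ∀ β, HasHeight g β →
    (∀ γ, (f γ).isSome → γ < β) → ∃ h ∈ p, JExtends f h ∧ HasHeight h β
  splitting : ∀ f ∈ p, ∀ β, HasHeight f β →
    (∃ g ∈ p, ∃ γ, (g γ).isSome ∧ ¬ γ < β) →
    ∃ g ∈ p, ∃ h ∈ p, g ≠ h ∧ JExtends f g ∧ JExtends f h ∧
      HasHeight g (β + 1) ∧ HasHeight h (β + 1)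

/-- The order of `P_J`: `q ≤ p` iff `q` end-extends `p`. -/
def JLe (q p : Set JNode) : Prop := ∃ α : Ordinal, p = (fun f => JRestrict f α) '' q

/-- A condition of the two-step iteration `P_J * Ṫ` (restricted to check-names, which
are dense): a pair `(p, q)` with `p ∈ P_J` and `q` a node of `p`; `Ṫ` is the name for
the generic tree and forcing with it means choosing higher and higher nodes. -/
def InIter (x : Set JNode × JNode) : Prop := IsJCond x.1 ∧ x.2 ∈ x.1

/-- The iteration order: strengthen the tree by end-extension and the node by
tree-extension. -/
def PairLe (y x : Set JNode × JNode) : Prop := JLe y.1 x.1 ∧ JExtends x.2 y.2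

/-- The distinguished set `D = {(p, q̌) : height(p) = α + 1, q a node of p of level α}`. -/
def InD (x : Set JNode × JNode) : Prop :=
  InIter x ∧ ∃ α < omega1, HasHeight x.2 (α + 1) ∧
    ∀ f ∈ x.1, ∀ γ, (f γ).isSome → γ ≤ α

section Aux
open scoped Classical

lemma jext_refl (f : JNode) : JExtends f f := fun _ _ => rfl

lemma jext_trans {f g h : JNode} (h1 : JExtends f g) (h2 : JExtends g h) : JExtends f h := by
  intro γ hs
  have hg : g γ = f γ := h1 γ hs
  rw [h2 γ (by rw [hg]; exact hs), hg]

lemma ord_lt_succ {a b : Ordinal} : a < b + 1 ↔ a ≤ b := Order.lt_add_one_iff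

lemma hasHeight_le {f : JNode} {a b : Ordinal} (ha : HasHeight f a) (hb : HasHeight f b) :
    a ≤ b := by
  by_contra hc
  push_neg at hc
  exact absurd ((hb b).mp ((ha b).mpr hc)) (lt_irrefl b)

lemma hasHeight_unique {f : JNode} {a b : Ordinal} (ha : HasHeight f a) (hb : HasHeight f b) :
    a = b := le_antisymm (hasHeight_le ha hb) (hasHeight_le hb ha)

lemma restrict_eq_self {f : JNode} {a : Ordinal} (h : ∀ γ, (f γ).isSome → γ < a) :
    JRestrict f a = f := by
  funext γ
  by_cases hγ : γ < a
  · simp [JRestrict, hγ]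
  · simp only [JRestrict, hγ, if_false]
    cases hfγ : f γ with
    | none => rfl
    | some v => exact absurd (h γ (by simp [hfγ])) hγ

lemma restrict_restrict (f : JNode) (a b : Ordinal) :
    JRestrict (JRestrict f a) b = JRestrict f (min a b) := by
  funext γ
  simp only [JRestrict, lt_min_iff]
  by_cases h1 : γ < a <;> by_cases h2 : γ < b <;> simp [h1, h2]

lemma restrict_congr {f g : JNode} {a : Ordinal} (h : ∀ γ, γ < a → f γ = g γ) :
    JRestrict f a = JRestrict g a := by
  funext γ
  by_cases hγ : γ < a
  · simp [JRestrict, hγ, h γ hγ]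
  · simp [JRestrict, hγ]

lemma restrict_isSome {f : JNode} {a γ : Ordinal} (h : (JRestrict f a γ).isSome) :
    (f γ).isSome ∧ γ < a := by
  by_cases hγ : γ < a
  · refine ⟨?_, hγ⟩
    simpa [JRestrict, hγ] using h
  · simp [JRestrict, hγ] at h

/-- limit of an extending chain of nodes -/
noncomputable def chainLimit (u : ℕ → JNode) : JNode :=
  fun γ => if h : ∃ k, (u k γ).isSome then u h.choose γ else none

lemma chain_mono {u : ℕ → JNode} (hc : ∀ k, JExtends (u k) (u (k + 1))) :
    ∀ k m, k ≤ m → JExtends (u k) (u m) := by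
  intro k m hkm
  induction m with
  | zero => rw [Nat.le_zero.mp hkm]; exact jext_refl _
  | succ m ih =>
    rcases Nat.lt_or_ge k (m + 1) with h | h
    · exact jext_trans (ih (Nat.lt_succ_iff.mp h)) (hc m)
    · rw [Nat.le_antisymm hkm h]; exact jext_refl _

lemma chainLimit_eq {u : ℕ → JNode} (hc : ∀ k, JExtends (u k) (u (k + 1))) {k : ℕ}
    {γ : Ordinal} (h : (u k γ).isSome) : chainLimit u γ = u k γ := by
  have hex : ∃ j, (u j γ).isSome := ⟨k, h⟩
  have hj := hex.choose_spec
  simp only [chainLimit, dif_pos hex]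
  have h1 : u (max hex.choose k) γ = u hex.choose γ :=
    chain_mono hc _ _ (le_max_left _ _) γ hj
  have h2 : u (max hex.choose k) γ = u k γ :=
    chain_mono hc _ _ (le_max_right _ _) γ h
  rw [← h1, h2]

lemma chainLimit_isSome {u : ℕ → JNode} {γ : Ordinal} :
    (chainLimit u γ).isSome ↔ ∃ k, (u k γ).isSome := by
  constructor
  · intro h
    by_contra hn
    simp only [chainLimit, dif_neg hn] at h
    exact (Option.not_isSome_iff_eq_none.mpr rfl) h
  · intro hex
    simpa only [chainLimit, dif_pos hex] using hex.choose_spec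

lemma chainLimit_extends {u : ℕ → JNode} (hc : ∀ k, JExtends (u k) (u (k + 1))) (k : ℕ) :
    JExtends (u k) (chainLimit u) := fun _ h => chainLimit_eq hc h

lemma chainLimit_height {u : ℕ → JNode} (hc : ∀ k, JExtends (u k) (u (k + 1)))
    {β : ℕ → Ordinal} (hh : ∀ k, HasHeight (u k) (β k)) :
    HasHeight (chainLimit u) (⨆ k, β k) := by
  intro γ
  rw [chainLimit_isSome]
  constructor
  · rintro ⟨k, hk⟩
    exact lt_of_lt_of_le ((hh k γ).mp hk) (le_ciSup (Ordinal.bddAbove_range _) k)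
  · intro hγ
    obtain ⟨k, hk⟩ := exists_lt_of_lt_ciSup hγ
    exact ⟨k, (hh k γ).mpr hk⟩

lemma exists_chain {X : Type*} (P : ℕ → X → Prop) (R : X → X → Prop)
    (h0 : ∃ x, P 0 x) (hstep : ∀ k x, P k x → ∃ y, P (k + 1) y ∧ R x y) :
    ∃ c : ℕ → X, (∀ k, P k (c k)) ∧ ∀ k, R (c k) (c (k + 1)) := by
  choose f hf hR using hstep
  obtain ⟨x0, hx0⟩ := h0
  let c : (k : ℕ) → {x : X // P k x} :=
    fun k => Nat.rec ⟨x0, hx0⟩ (fun k ih => ⟨f k ih.1 ih.2, hf k ih.1 ih.2⟩) k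
  exact ⟨fun k => (c k).1, fun k => (c k).2, fun k => hR k (c k).1 (c k).2⟩

/-- a node extended by one value at level `δ` -/
noncomputable def extendNode (b : JNode) (v : ℕ) (δ : Ordinal) : JNode :=
  fun γ => if γ = δ then some v else b γ

lemma extendNode_height {b : JNode} {δ : Ordinal} (hb : HasHeight b δ) (v : ℕ) :
    HasHeight (extendNode b v δ) (δ + 1) := by
  intro γ
  by_cases hγ : γ = δ
  · simp [extendNode, hγ, ord_lt_succ]
  · simp only [extendNode, if_neg hγ, hb γ, ord_lt_succ]
    exact ⟨le_of_lt, fun h => lt_of_le_of_ne h hγ⟩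

lemma extendNode_extends {b : JNode} {δ : Ordinal} (hb : HasHeight b δ) (v : ℕ) :
    JExtends b (extendNode b v δ) := by
  intro γ h
  have : γ < δ := (hb γ).mp h
  simp [extendNode, ne_of_lt this]

lemma extendNode_restrict (b : JNode) (v : ℕ) {a δ : Ordinal} (h : a ≤ δ) :
    JRestrict (extendNode b v δ) a = JRestrict b a := by
  apply restrict_congr
  intro γ hγ
  simp [extendNode, ne_of_lt (lt_of_lt_of_le hγ h)]

end Aux

lemma ord_succ_le {a b : Ordinal} : a + 1 ≤ b ↔ a < b := Order.add_one_le_iff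

lemma ord_self_lt_succ {a : Ordinal} : a < a + 1 := ord_lt_succ.mpr le_rfl

lemma omega1_succ_lt {a : Ordinal} (h : a < omega1) : a + 1 < omega1 := by
  have hlim : Order.IsSuccLimit (Cardinal.aleph 1).ord := Cardinal.isSuccLimit_ord (Cardinal.aleph0_le_aleph 1)
  rw [Ordinal.add_one_eq_succ]
  exact hlim.succ_lt h

/-- The two-step iteration `P_J * Ṫ` of Jech's forcing followed by forcing with the
generic tree has a dense σ-closed subset, namely
`D = {(p, q̌) : height(p) = α + 1, q a node of p of level α}`:
`D` is dense, and every descending `ω`-sequence in `D` has a lower bound in `D`. -/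
theorem stmt13 :
    (∀ x : Set JNode × JNode, InIter x → ∃ y, InD y ∧ PairLe y x) ∧
    (∀ s : ℕ → Set JNode × JNode, (∀ n, InD (s n)) →
      (∀ n, PairLe (s (n + 1)) (s n)) →
      ∃ y, InD y ∧ ∀ n, PairLe y (s n)) := by
  constructor
  · -- Density
    rintro ⟨p, q⟩ ⟨hp, hq⟩
    obtain ⟨α, hαω, hbound, f, hf, hfh⟩ := hp.succHeight
    obtain ⟨h, hhp, hext, hht⟩ := hp.normal q hq f hf (α + 1) hfh
      (fun γ hγ => ord_lt_succ.mpr (hbound q hq γ hγ))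
    refine ⟨(p, h), ⟨⟨hp, hhp⟩, α, hαω, hht, hbound⟩, ⟨α + 1, ?_⟩, hext⟩
    ext g
    simp only [Set.mem_image]
    constructor
    · intro hg
      exact ⟨g, hg, restrict_eq_self (fun γ hγ => ord_lt_succ.mpr (hbound g hg γ hγ))⟩
    · rintro ⟨g', hg', rfl⟩
      exact hp.closedRestrict g' hg' _
  · -- σ-closure
    intro s hD hle
    set p : ℕ → Set JNode := fun n => (s n).1 with hp_def
    set q : ℕ → JNode := fun n => (s n).2 with hq_def
    have hp : ∀ n, IsJCond (p n) := fun n => (hD n).1.1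
    have hqp : ∀ n, q n ∈ p n := fun n => (hD n).1.2
    choose α hαω hqh hbound using fun n => (hD n).2
    have hqe : ∀ n, JExtends (q n) (q (n + 1)) := fun n => (hle n).2
    have hple : ∀ n, JLe (p (n + 1)) (p n) := fun n => (hle n).1
    have hsub1 : ∀ n, p n ⊆ p (n + 1) := by
      intro n f hf
      obtain ⟨β, hβ⟩ := hple n
      rw [hβ] at hf
      obtain ⟨g, hg, rfl⟩ := hf
      exact (hp (n + 1)).closedRestrict g hg β
    have hsub : ∀ n m, n ≤ m → p n ⊆ p m := by
      intro n m hnm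
      induction m, hnm using Nat.le_induction with
      | base => exact subset_rfl
      | succ m hm ih => exact subset_trans ih (hsub1 m)
    have hqmono : ∀ n m, n ≤ m → JExtends (q n) (q m) := chain_mono hqe
    have hαmono : ∀ n m, n ≤ m → α n ≤ α m := by
      intro n m hnm
      have h1 : (q n (α n)).isSome := (hqh n _).mpr ord_self_lt_succ
      have h2 : (q m (α n)).isSome := by rw [hqmono n m hnm _ h1]; exact h1
      exact ord_lt_succ.mp ((hqh m _).mp h2)
    have fact4 : ∀ n m, n ≤ m → ∀ f ∈ p m, JRestrict f (α n + 1) ∈ p n := by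
      intro n m hnm
      induction m, hnm using Nat.le_induction with
      | base => exact fun f hf => (hp n).closedRestrict f hf _
      | succ m hm ih =>
        intro f hf
        obtain ⟨β, hβ⟩ := hple m
        have hq1 : q m ∈ (fun f => JRestrict f β) '' (p (m + 1)) := by
          rw [← hβ]; exact hqp m
        obtain ⟨g, hg, hgq⟩ := hq1
        have hβα : α m < β := by
          have hs : (q m (α m)).isSome := (hqh m _).mpr ord_self_lt_succ
          rw [← hgq] at hs
          exact (restrict_isSome hs).2
        have hmem : JRestrict f β ∈ p m := by rw [hβ]; exact ⟨f, hf, rfl⟩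
        have hres := ih _ hmem
        rwa [restrict_restrict, min_eq_right
          (ord_succ_le.mpr (lt_of_le_of_lt (hαmono n m hm) hβα))] at hres
    set δ : Ordinal := ⨆ n, α n + 1 with hδ_def
    have hδ1 : ∀ n, α n + 1 ≤ δ := fun n => le_ciSup (Ordinal.bddAbove_range _) n
    have hδ2 : ∀ {γ : Ordinal}, γ < δ → ∃ n, γ < α n + 1 := fun h => exists_lt_of_lt_ciSup h
    have hδ0 : ∀ n, α n < δ := fun n => lt_of_lt_of_le ord_self_lt_succ (hδ1 n)
    have hδω : δ < omega1 := by
      apply Ordinal.iSup_lt_ord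
      · rw [Cardinal.mk_nat, show omega1.cof = Cardinal.aleph 1 from
          Cardinal.isRegular_aleph_one.cof_eq]
        exact Cardinal.aleph0_lt_aleph_one
      · exact fun n => omega1_succ_lt (hαω n)
    set Q : JNode := chainLimit q with hQ_def
    have hQh : HasHeight Q δ := chainLimit_height hqe hqh
    have hQe : ∀ n, JExtends (q n) Q := chainLimit_extends hqe
    set U : Set JNode := ⋃ n, p n with hU_def
    have hUsub : ∀ n, p n ⊆ U := fun n => Set.subset_iUnion p n
    have hUc : U.Countable := Set.countable_iUnion (fun n => (hp n).countable)
    have hQres : ∀ n, JRestrict Q (α n + 1) = q n := by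
      intro n
      rw [restrict_congr (fun γ hγ => chainLimit_eq hqe ((hqh n γ).mpr hγ)),
        restrict_eq_self (fun γ hs => (hqh n γ).mp hs)]
    have hQgood : HasHeight Q δ ∧ (∀ a, a < δ → JRestrict Q a ∈ U) ∧
        (∀ n, JRestrict Q (α n + 1) ∈ p n) := by
      refine ⟨hQh, ?_, fun n => by rw [hQres n]; exact hqp n⟩
      intro a ha
      obtain ⟨n, hn⟩ := hδ2 ha
      have heq : JRestrict Q a = JRestrict (q n) a :=
        restrict_congr (fun γ hγ => chainLimit_eq hqe ((hqh n γ).mpr (lt_trans hγ hn)))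
      rw [heq]
      exact hUsub n ((hp n).closedRestrict (q n) (hqp n) a)
    have key : ∀ f, f ∈ U → ∃ b, JExtends f b ∧ HasHeight b δ ∧
        (∀ a, a < δ → JRestrict b a ∈ U) ∧ (∀ n, JRestrict b (α n + 1) ∈ p n) := by
      intro f hf
      obtain ⟨n₀, hfn₀⟩ := Set.mem_iUnion.mp hf
      have h0 : ∃ h, h ∈ p (n₀ + 0) ∧ JExtends f h ∧ HasHeight h (α (n₀ + 0) + 1) := by
        obtain ⟨h, hh, he, hht⟩ := (hp n₀).normal f hfn₀ (q n₀) (hqp n₀) (α n₀ + 1) (hqh n₀)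
          (fun γ hγ => ord_lt_succ.mpr (hbound n₀ f hfn₀ γ hγ))
        exact ⟨h, by simpa using hh, he, by simpa using hht⟩
      have hstep : ∀ k h, (h ∈ p (n₀ + k) ∧ JExtends f h ∧ HasHeight h (α (n₀ + k) + 1)) →
          ∃ h', (h' ∈ p (n₀ + (k + 1)) ∧ JExtends f h' ∧
            HasHeight h' (α (n₀ + (k + 1)) + 1)) ∧ JExtends h h' := by
        rintro k h ⟨hh, hfe, hht⟩
        obtain ⟨h', hh', he', hht'⟩ := (hp (n₀ + (k + 1))).normal h
          (hsub _ _ (by omega) hh) (q (n₀ + (k + 1))) (hqp _) (α (n₀ + (k + 1)) + 1) (hqh _)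
          (fun γ hγ => lt_of_lt_of_le ((hht γ).mp hγ)
            (add_le_add_left (hαmono (n₀ + k) (n₀ + (k + 1)) (by omega)) 1))
        exact ⟨h', ⟨hh', jext_trans hfe he', hht'⟩, he'⟩
      obtain ⟨c, hc1, hc2⟩ := exists_chain
        (fun k h => h ∈ p (n₀ + k) ∧ JExtends f h ∧ HasHeight h (α (n₀ + k) + 1))
        JExtends h0 hstep
      have hcheight : ∀ k, HasHeight (c k) (α (n₀ + k) + 1) := fun k => (hc1 k).2.2
      have hbh : HasHeight (chainLimit c) (⨆ k, α (n₀ + k) + 1) :=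
        chainLimit_height hc2 hcheight
      have hsupeq : (⨆ k, α (n₀ + k) + 1) = δ := by
        apply le_antisymm
        · exact ciSup_le (fun k => hδ1 (n₀ + k))
        · exact ciSup_le (fun n => le_trans
            (add_le_add_left (hαmono n (n₀ + n) (by omega)) 1)
            (le_ciSup (Ordinal.bddAbove_range _) n))
      rw [hsupeq] at hbh
      refine ⟨chainLimit c, jext_trans (hc1 0).2.1 (chainLimit_extends hc2 0), hbh, ?_, ?_⟩
      · intro a ha
        obtain ⟨n, hn⟩ := hδ2 ha
        have heq : JRestrict (chainLimit c) a = JRestrict (c n) a :=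
          restrict_congr (fun γ hγ => chainLimit_eq hc2 ((hcheight n γ).mpr
            (lt_of_lt_of_le (lt_trans hγ hn)
              (add_le_add_left (hαmono n (n₀ + n) (by omega)) 1))))
        rw [heq]
        exact hUsub _ ((hp (n₀ + n)).closedRestrict (c n) (hc1 n).1 a)
      · intro n
        have h1 : α n + 1 ≤ α (n₀ + n) + 1 := add_le_add_left (hαmono n (n₀ + n) (by omega)) 1
        have heq : JRestrict (chainLimit c) (α n + 1) = JRestrict (c n) (α n + 1) :=
          restrict_congr (fun γ hγ => chainLimit_eq hc2 ((hcheight n γ).mpr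
            (lt_of_lt_of_le hγ h1)))
        rw [heq]
        exact fact4 n (n₀ + n) (by omega) (c n) (hc1 n).1
    have key' : ∀ f : JNode, ∃ b, f ∈ U → (JExtends f b ∧ HasHeight b δ ∧
        (∀ a, a < δ → JRestrict b a ∈ U) ∧ (∀ n, JRestrict b (α n + 1) ∈ p n)) := by
      intro f
      by_cases hf : f ∈ U
      · obtain ⟨b, hb⟩ := key f hf
        exact ⟨b, fun _ => hb⟩
      · exact ⟨f, fun h => absurd h hf⟩
    choose Br hBr using key'
    set B : Set JNode := insert Q (Br '' U) with hB_def
    have hQB : Q ∈ B := Set.mem_insert _ _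
    have hBgood : ∀ b ∈ B, HasHeight b δ ∧ (∀ a, a < δ → JRestrict b a ∈ U) ∧
        (∀ n, JRestrict b (α n + 1) ∈ p n) := by
      intro b hb
      rcases Set.mem_insert_iff.mp hb with rfl | ⟨f, hf, rfl⟩
      · exact hQgood
      · exact (hBr f hf).2
    have hBheight : ∀ b ∈ B, HasHeight b δ := fun b hb => (hBgood b hb).1
    have hBc : B.Countable := (hUc.image Br).insert Q
    set T : Set JNode := ⋃ v : ℕ, (fun b => extendNode b v δ) '' B with hT_def
    have hTmem : ∀ t ∈ T, ∃ b ∈ B, ∃ v : ℕ, t = extendNode b v δ := by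
      intro t ht
      rw [hT_def] at ht
      simp only [Set.mem_iUnion, Set.mem_image] at ht
      obtain ⟨v, b, hb, heq⟩ := ht
      exact ⟨b, hb, v, heq.symm⟩
    have hTmem' : ∀ b ∈ B, ∀ v : ℕ, extendNode b v δ ∈ T := by
      intro b hb v
      exact Set.mem_iUnion.mpr ⟨v, b, hb, rfl⟩
    have hTheight : ∀ t ∈ T, HasHeight t (δ + 1) := by
      intro t ht
      obtain ⟨b, hb, v, rfl⟩ := hTmem t ht
      exact extendNode_height (hBheight b hb) v
    have hTc : T.Countable := Set.countable_iUnion (fun v => hBc.image _)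
    set P : Set JNode := U ∪ B ∪ T with hP_def
    have hUP : U ⊆ P := subset_trans Set.subset_union_left Set.subset_union_left
    have hBP : B ⊆ P := subset_trans Set.subset_union_right Set.subset_union_left
    have hTP : T ⊆ P := Set.subset_union_right
    have hUbound : ∀ f ∈ U, ∀ γ, (f γ).isSome → γ < δ := by
      intro f hf γ h
      obtain ⟨n, hn⟩ := Set.mem_iUnion.mp hf
      exact lt_of_le_of_lt (hbound n f hn γ h) (hδ0 n)
    have hPbound : ∀ f ∈ P, ∀ γ, (f γ).isSome → γ ≤ δ := by
      intro f hf γ h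
      rcases hf with (hfU | hfB) | hfT
      · exact le_of_lt (hUbound f hfU γ h)
      · exact le_of_lt ((hBheight f hfB γ).mp h)
      · exact ord_lt_succ.mp ((hTheight f hfT γ).mp h)
    have hUheight : ∀ n, ∀ g ∈ p n, ∀ β, HasHeight g β → β ≤ α n + 1 := by
      intro n g hg β hβ
      by_contra hc
      push_neg at hc
      exact absurd (hbound n g hg _ ((hβ _).mpr hc)) (not_le.mpr ord_self_lt_succ)
    -- IsJCond P
    have hPcond : IsJCond P := by
      refine ⟨(hUc.union hBc).union hTc, ?_, ?_, ?_, ?_, ?_⟩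
      · -- nodes
        intro f hf
        rcases hf with (hfU | hfB) | hfT
        · obtain ⟨n, hn⟩ := Set.mem_iUnion.mp hfU
          exact (hp n).nodes f hn
        · exact ⟨δ, hδω, hBheight f hfB⟩
        · exact ⟨δ + 1, omega1_succ_lt hδω, hTheight f hfT⟩
      · -- closedRestrict
        intro f hf a
        rcases hf with (hfU | hfB) | hfT
        · obtain ⟨n, hn⟩ := Set.mem_iUnion.mp hfU
          exact hUP (hUsub n ((hp n).closedRestrict f hn a))
        · rcases lt_or_ge a δ with h | h
          · exact hUP ((hBgood f hfB).2.1 a h)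
          · rw [restrict_eq_self (fun γ hs => lt_of_lt_of_le ((hBheight f hfB γ).mp hs) h)]
            exact hBP hfB
        · obtain ⟨b, hb, v, rfl⟩ := hTmem f hfT
          rcases le_or_gt a δ with h | h
          · rw [extendNode_restrict b v h]
            rcases lt_or_eq_of_le h with h' | h'
            · exact hUP ((hBgood b hb).2.1 a h')
            · rw [restrict_eq_self (fun γ hs => by
                rw [h']; exact (hBheight b hb γ).mp hs)]
              exact hBP hb
          · rw [restrict_eq_self (fun γ hs => lt_of_lt_of_le
              ((hTheight _ (hTmem' b hb v) γ).mp hs) (ord_succ_le.mpr h))]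
            exact hTP (hTmem' b hb v)
      · -- succHeight
        exact ⟨δ, hδω, hPbound, extendNode Q 0 δ, hTP (hTmem' Q hQB 0),
          extendNode_height hQh 0⟩
      · -- normal
        intro f hf g hg β hgβ hdom
        rcases hg with (hgU | hgB) | hgT
        · obtain ⟨n, hgn⟩ := Set.mem_iUnion.mp hgU
          have hβδ : β ≤ δ := le_trans (hUheight n g hgn β hgβ) (hδ1 n)
          rcases hf with (hfU | hfB) | hfT
          · obtain ⟨m, hfm⟩ := Set.mem_iUnion.mp hfU
            obtain ⟨h, hh, he, hht⟩ := (hp (max m n)).normal f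
              (hsub m _ (le_max_left _ _) hfm) g (hsub n _ (le_max_right _ _) hgn) β hgβ hdom
            exact ⟨h, hUP (hUsub _ hh), he, hht⟩
          · have hfh := hBheight f hfB
            have hδβ : δ ≤ β := by
              by_contra hc
              push_neg at hc
              exact absurd (hdom β ((hfh β).mpr hc)) (lt_irrefl β)
            have heq : β = δ := le_antisymm hβδ hδβ
            exact ⟨f, hBP hfB, jext_refl f, heq ▸ hfh⟩
          · have hfh := hTheight f hfT
            have hδβ : δ + 1 ≤ β := by
              by_contra hc
              push_neg at hc
              exact absurd (hdom β ((hfh β).mpr hc)) (lt_irrefl β)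
            exact absurd (le_trans hδβ hβδ) (not_le.mpr ord_self_lt_succ)
        · have hβ : β = δ := hasHeight_unique hgβ (hBheight g hgB)
          subst hβ
          rcases hf with (hfU | hfB) | hfT
          · exact ⟨Br f, hBP (Set.mem_insert_of_mem _ ⟨f, hfU, rfl⟩),
              (hBr f hfU).1, (hBr f hfU).2.1⟩
          · exact ⟨f, hBP hfB, jext_refl f, hBheight f hfB⟩
          · have hfh := hTheight f hfT
            exact absurd (hdom δ ((hfh δ).mpr ord_self_lt_succ)) (lt_irrefl δ)
        · have hβ : β = δ + 1 := hasHeight_unique hgβ (hTheight g hgT)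
          subst hβ
          rcases hf with (hfU | hfB) | hfT
          · have hBrB : Br f ∈ B := Set.mem_insert_of_mem _ ⟨f, hfU, rfl⟩
            exact ⟨extendNode (Br f) 0 δ, hTP (hTmem' _ hBrB 0),
              jext_trans (hBr f hfU).1 (extendNode_extends (hBr f hfU).2.1 0),
              extendNode_height (hBr f hfU).2.1 0⟩
          · exact ⟨extendNode f 0 δ, hTP (hTmem' f hfB 0),
              extendNode_extends (hBheight f hfB) 0, extendNode_height (hBheight f hfB) 0⟩
          · exact ⟨f, hTP hfT, jext_refl f, hTheight f hfT⟩
      · -- splitting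
        intro f hf β hfβ hprem
        have hsplitB : ∀ b ∈ B, JExtends f b → β = δ →
            ∃ g ∈ P, ∃ h ∈ P, g ≠ h ∧ JExtends f g ∧ JExtends f h ∧
              HasHeight g (β + 1) ∧ HasHeight h (β + 1) := by
          intro b hb hfb hβδ
          subst hβδ
          refine ⟨extendNode b 0 δ, hTP (hTmem' b hb 0), extendNode b 1 δ,
            hTP (hTmem' b hb 1), ?_, jext_trans hfb (extendNode_extends (hBheight b hb) 0),
            jext_trans hfb (extendNode_extends (hBheight b hb) 1),
            extendNode_height (hBheight b hb) 0, extendNode_height (hBheight b hb) 1⟩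
          intro hcontra
          have := congrFun hcontra δ
          simp [extendNode] at this
        rcases hf with (hfU | hfB) | hfT
        · obtain ⟨m, hfm⟩ := Set.mem_iUnion.mp hfU
          have hβ : β ≤ δ := le_trans (hUheight m f hfm β hfβ) (hδ1 m)
          rcases lt_or_eq_of_le hβ with hlt | heq
          · obtain ⟨n, hn⟩ := hδ2 hlt
            obtain ⟨g, hg, h, hh, hne, heg, heh, hhg, hhh⟩ :=
              (hp (max m n)).splitting f (hsub m _ (le_max_left _ _) hfm) β hfβ
              ⟨q (max m n), hqp _, α (max m n), (hqh _ _).mpr ord_self_lt_succ,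
                not_lt.mpr (le_trans (ord_lt_succ.mp hn) (hαmono n _ (le_max_right _ _)))⟩
            exact ⟨g, hUP (hUsub _ hg), h, hUP (hUsub _ hh), hne, heg, heh, hhg, hhh⟩
          · have hBrB : Br f ∈ B := Set.mem_insert_of_mem _ ⟨f, hfU, rfl⟩
            exact hsplitB (Br f) hBrB (hBr f hfU).1 heq
        · exact hsplitB f hfB (jext_refl f) (hasHeight_unique hfβ (hBheight f hfB))
        · obtain ⟨g, hg, γ, hγs, hγn⟩ := hprem
          have hβ : β = δ + 1 := hasHeight_unique hfβ (hTheight f hfT)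
          exact absurd (lt_of_le_of_lt (hPbound g hg γ hγs)
            (by rw [hβ]; exact ord_self_lt_succ)) hγn
    -- assemble
    refine ⟨(P, extendNode Q 0 δ), ⟨⟨hPcond, hTP (hTmem' Q hQB 0)⟩, δ, hδω,
      extendNode_height hQh 0, hPbound⟩, ?_⟩
    intro n
    refine ⟨⟨α n + 1, ?_⟩, jext_trans (hQe n) (extendNode_extends hQh 0)⟩
    ext g
    simp only [Set.mem_image]
    constructor
    · intro hg
      exact ⟨g, hUP (hUsub n hg),
        restrict_eq_self (fun γ h => ord_lt_succ.mpr (hbound n g hg γ h))⟩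
    · rintro ⟨g', hg', rfl⟩
      rcases hg' with (hU | hB) | hT
      · obtain ⟨m, hm⟩ := Set.mem_iUnion.mp hU
        rcases le_total m n with hmn | hmn
        · exact (hp n).closedRestrict g' (hsub m n hmn hm) _
        · exact fact4 n m hmn g' hm
      · exact (hBgood g' hB).2.2 n
      · obtain ⟨b, hb, v, rfl⟩ := hTmem g' hT
        rw [extendNode_restrict b v (hδ1 n)]
        exact (hBgood b hb).2.2 n
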